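/- Let Z be a random vector in ℝ^q whose distribution is radial (OZ has the same law as Z for every orthogonal matrix O), and let A, B ∈ M_{d,q}(ℝ). If B Bᵀ − A Aᵀ is positive semidefinite, then A Z is dominated by B Z in the convex order: E f(AZ) ≤ E f(BZ) for every convex f : ℝ^d → ℝ for which both expectations exist. -/

import Mathlib

open MeasureTheory Matrix

namespace RadialAux



variable {n m : ℕ}

/-- dot product of a vector with itself is nonneg -/
lemma dot_self_nonneg (x : Fin n → ℝ) : 0 ≤ x ⬝ᵥ x :=
  Finset.sum_nonneg fun i _ => mul_self_nonneg (x i)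

lemma dot_self_eq_zero {x : Fin n → ℝ} (h : x ⬝ᵥ x = 0) : x = 0 := by
  funext i
  have := (Finset.sum_eq_zero_iff_of_nonneg
    (fun j _ => mul_self_nonneg (x j))).mp h i (Finset.mem_univ i)
  simpa [mul_self_eq_zero] using this

lemma dot_cs (x y : Fin n → ℝ) : (x ⬝ᵥ y)^2 ≤ (x ⬝ᵥ x) * (y ⬝ᵥ y) := by
  simpa [dotProduct, pow_two] using
    Finset.sum_mul_sq_le_sq_mul_sq Finset.univ x y

/-- contraction property wrt euclidean quadratic form -/
def Con (X : Matrix (Fin m) (Fin n) ℝ) : Prop :=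
  ∀ x : Fin n → ℝ, (X *ᵥ x) ⬝ᵥ (X *ᵥ x) ≤ x ⬝ᵥ x

lemma con_flip (X : Matrix (Fin m) (Fin n) ℝ) (h : Con Xᵀ) : Con X := by
  intro x
  set a := X *ᵥ x with ha
  have key : a ⬝ᵥ a = (Xᵀ *ᵥ a) ⬝ᵥ x := by
    rw [ha]
    rw [show (X *ᵥ x) ⬝ᵥ (X *ᵥ x) = (X *ᵥ x) ⬝ᵥ (X *ᵥ x) from rfl,
      Matrix.dotProduct_mulVec, Matrix.mulVec_transpose]
  have h2 : (a ⬝ᵥ a)^2 ≤ (a ⬝ᵥ a) * (x ⬝ᵥ x) := by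
    calc (a ⬝ᵥ a)^2 = ((Xᵀ *ᵥ a) ⬝ᵥ x)^2 := by rw [key]
    _ ≤ ((Xᵀ *ᵥ a) ⬝ᵥ (Xᵀ *ᵥ a)) * (x ⬝ᵥ x) := dot_cs _ _
    _ ≤ (a ⬝ᵥ a) * (x ⬝ᵥ x) := by
        have := h a
        have hx := dot_self_nonneg x
        nlinarith [dot_self_nonneg (Xᵀ *ᵥ a)]
  rcases eq_or_lt_of_le (dot_self_nonneg a) with h0 | h0
  · rw [← h0]; exact dot_self_nonneg x
  · nlinarith




variable {n : ℕ} {S : Matrix (Fin n) (Fin n) ℝ} (hS : S.IsHermitian)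

noncomputable def specDiag (v : Fin n → ℝ) : Matrix (Fin n) (Fin n) ℝ :=
  (hS.eigenvectorUnitary : Matrix (Fin n) (Fin n) ℝ) * diagonal v *
    star (hS.eigenvectorUnitary : Matrix (Fin n) (Fin n) ℝ)

lemma specDiag_self : specDiag hS hS.eigenvalues = S := by
  have h := hS.spectral_theorem
  rw [specDiag]
  have h2 : (RCLike.ofReal ∘ hS.eigenvalues : Fin n → ℝ) = hS.eigenvalues := by
    funext i; simp [Function.comp, RCLike.ofReal_real_eq_id]
  rw [← h2]; exact h.symm

lemma star_mul_self_eigen :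
    star (hS.eigenvectorUnitary : Matrix (Fin n) (Fin n) ℝ) *
      (hS.eigenvectorUnitary : Matrix (Fin n) (Fin n) ℝ) = 1 :=
  Matrix.mem_unitaryGroup_iff'.mp hS.eigenvectorUnitary.2

lemma self_mul_star_eigen :
    (hS.eigenvectorUnitary : Matrix (Fin n) (Fin n) ℝ) *
      star (hS.eigenvectorUnitary : Matrix (Fin n) (Fin n) ℝ) = 1 :=
  Matrix.mem_unitaryGroup_iff.mp hS.eigenvectorUnitary.2

lemma specDiag_mul (v w : Fin n → ℝ) :
    specDiag hS v * specDiag hS w = specDiag hS (v * w) := by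
  set U := (hS.eigenvectorUnitary : Matrix (Fin n) (Fin n) ℝ) with hU
  have h : star U * U = 1 := star_mul_self_eigen hS
  rw [specDiag, specDiag, specDiag]
  calc U * diagonal v * star U * (U * diagonal w * star U)
      = U * (diagonal v * (star U * U * (diagonal w * star U))) := by
        simp only [Matrix.mul_assoc]
    _ = U * (diagonal (v * w) * star U) := by
        rw [h, Matrix.one_mul, ← Matrix.mul_assoc (diagonal v), diagonal_mul_diagonal]
        rfl
    _ = U * diagonal (v * w) * star U := by rw [Matrix.mul_assoc]

lemma specDiag_one : specDiag hS 1 = 1 := by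
  have h1 : diagonal (1 : Fin n → ℝ) = (1 : Matrix (Fin n) (Fin n) ℝ) := diagonal_one
  rw [specDiag, h1, Matrix.mul_one, self_mul_star_eigen hS]

lemma specDiag_transpose (v : Fin n → ℝ) : (specDiag hS v)ᵀ = specDiag hS v := by
  rw [specDiag, Matrix.star_eq_conjTranspose, conjTranspose_eq_transpose_of_trivial,
    Matrix.transpose_mul, Matrix.transpose_mul, transpose_transpose, diagonal_transpose,
    Matrix.mul_assoc]

lemma specDiag_posSemidef {v : Fin n → ℝ} (hv : ∀ i, 0 ≤ v i) :
    (specDiag hS v).PosSemidef := by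
  have hd : (diagonal v).PosSemidef := Matrix.PosSemidef.diagonal hv
  have h2 := hd.mul_mul_conjTranspose_same
    (hS.eigenvectorUnitary : Matrix (Fin n) (Fin n) ℝ)
  rw [specDiag]
  rwa [← Matrix.star_eq_conjTranspose] at h2

lemma specDiag_sum {ι : Type*} (t : Finset ι) (w : ι → ℝ) (v : ι → Fin n → ℝ) :
    ∑ s ∈ t, w s • specDiag hS (v s) = specDiag hS (∑ s ∈ t, w s • v s) := by
  rw [specDiag]
  have hdiag : diagonal (∑ s ∈ t, w s • v s) = ∑ s ∈ t, w s • diagonal (v s) := by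
    ext i j
    by_cases h : i = j
    · subst h
      simp [Matrix.sum_apply, diagonal_apply_eq, Finset.sum_apply]
    · simp [Matrix.sum_apply, diagonal_apply_ne _ h, h]
  rw [hdiag, Finset.mul_sum, Finset.sum_mul]
  refine Finset.sum_congr rfl fun s _ => ?_
  simp [specDiag, Matrix.mul_smul, Matrix.smul_mul]




variable {d q : ℕ}

-- helper: quadratic form of Y * Yᵀ
lemma qf_mul {a b : ℕ} (Y : Matrix (Fin a) (Fin b) ℝ) (x : Fin a → ℝ) :
    x ⬝ᵥ ((Y * Yᵀ) *ᵥ x) = (Yᵀ *ᵥ x) ⬝ᵥ (Yᵀ *ᵥ x) := by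
  rw [← Matrix.mulVec_mulVec, Matrix.dotProduct_mulVec, Matrix.mulVec_transpose]

lemma exists_orth (A C : Matrix (Fin d) (Fin q) ℝ) (h : C * Cᵀ = A * Aᵀ) :
    ∃ O₀ ∈ Matrix.orthogonalGroup (Fin q) ℝ, C = A * O₀ := by
  classical
  set α : EuclideanSpace ℝ (Fin d) →ₗ[ℝ] EuclideanSpace ℝ (Fin q) := Matrix.toEuclideanLin Aᵀ
  set γ : EuclideanSpace ℝ (Fin d) →ₗ[ℝ] EuclideanSpace ℝ (Fin q) := Matrix.toEuclideanLin Cᵀ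
  have hα : ∀ x, α x = Aᵀ *ᵥ x := fun x => rfl
  have hγ : ∀ x, γ x = Cᵀ *ᵥ x := fun x => rfl
  have hinner : ∀ (u v : EuclideanSpace ℝ (Fin q)),
      (inner ℝ u v : ℝ) = (u : Fin q → ℝ) ⬝ᵥ (v : Fin q → ℝ) := by
    intro u v
    simp [PiLp.inner_apply, dotProduct, mul_comm]
  have hnorm : ∀ x, ‖γ x‖ = ‖α x‖ := by
    intro x
    have h1 : (inner ℝ (γ x) (γ x) : ℝ) = inner ℝ (α x) (α x) := by
      rw [hinner, hinner, hα, hγ]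
      calc (Cᵀ *ᵥ x) ⬝ᵥ (Cᵀ *ᵥ x) = x ⬝ᵥ ((C * Cᵀ) *ᵥ x) := (qf_mul C x).symm
        _ = x ⬝ᵥ ((A * Aᵀ) *ᵥ x) := by rw [h]
        _ = (Aᵀ *ᵥ x) ⬝ᵥ (Aᵀ *ᵥ x) := qf_mul A x
    have h2 := congrArg Real.sqrt h1
    rwa [real_inner_self_eq_norm_sq, real_inner_self_eq_norm_sq,
      Real.sqrt_sq (norm_nonneg _), Real.sqrt_sq (norm_nonneg _)] at h2
  have hker : LinearMap.ker α ≤ LinearMap.ker γ := by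
    intro x hx
    rw [LinearMap.mem_ker] at hx ⊢
    have := hnorm x
    rw [hx, norm_zero] at this
    exact norm_eq_zero.mp this
  set S := LinearMap.range α
  set e := α.quotKerEquivRange
  set L0 : S →ₗ[ℝ] EuclideanSpace ℝ (Fin q) :=
    ((LinearMap.ker α).liftQ γ hker) ∘ₗ (e.symm : S →ₗ[ℝ] _)
  have hL0 : ∀ x : EuclideanSpace ℝ (Fin d), ∀ hm : α x ∈ S, L0 ⟨α x, hm⟩ = γ x := by
    intro x hm
    have he : e (Submodule.Quotient.mk x) = ⟨α x, hm⟩ := by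
      apply Subtype.ext
      exact α.quotKerEquivRange_apply_mk x
    have he' : e.symm ⟨α x, hm⟩ = Submodule.Quotient.mk x := by
      rw [← he, LinearEquiv.symm_apply_apply]
    simp only [L0, LinearMap.comp_apply, LinearEquiv.coe_coe, he', Submodule.liftQ_apply]
  have hL0norm : ∀ s : S, ‖L0 s‖ = ‖s‖ := by
    rintro ⟨v, hv⟩
    obtain ⟨x, rfl⟩ := hv
    rw [hL0 x (LinearMap.mem_range_self α x), hnorm]
    rfl
  set L : S →ₗᵢ[ℝ] EuclideanSpace ℝ (Fin q) := ⟨L0, hL0norm⟩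
  set Oiso := L.extend
  have hOiso : ∀ x, Oiso (α x) = γ x := by
    intro x
    have := L.extend_apply ⟨α x, LinearMap.mem_range_self α x⟩
    rw [show ((⟨α x, LinearMap.mem_range_self α x⟩ : S) : EuclideanSpace ℝ (Fin q)) = α x
      from rfl] at this
    rw [this]
    exact hL0 x _
  set Omat : Matrix (Fin q) (Fin q) ℝ := Matrix.toEuclideanLin.symm Oiso.toLinearMap
  have hOmat : ∀ v : Fin q → ℝ, Omat *ᵥ v = Oiso (WithLp.toLp 2 v) := by
    intro v
    have h1 : Matrix.toEuclideanLin Omat = Oiso.toLinearMap :=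
      LinearEquiv.apply_symm_apply _ _
    have h2 : Matrix.toEuclideanLin Omat (WithLp.toLp 2 v) = Oiso (WithLp.toLp 2 v) := by rw [h1]; rfl
    exact congrArg WithLp.ofLp h2
  have hOA : Omat * Aᵀ = Cᵀ := by
    apply Matrix.toEuclideanLin.injective
    apply LinearMap.ext
    intro v
    show Matrix.toEuclideanLin (Omat * Aᵀ) v = Matrix.toEuclideanLin Cᵀ v
    refine congrArg (WithLp.toLp 2) (?_ : (Matrix.toEuclideanLin (Omat * Aᵀ) v).ofLp = (Matrix.toEuclideanLin Cᵀ v).ofLp)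
    have lhs : Matrix.toEuclideanLin (Omat * Aᵀ) v = (Omat * Aᵀ) *ᵥ v := rfl
    rw [lhs, ← Matrix.mulVec_mulVec, hOmat (Aᵀ *ᵥ v)]
    have : (WithLp.toLp 2 (Aᵀ *ᵥ (v : Fin d → ℝ)) : EuclideanSpace ℝ (Fin q)) = α v := rfl
    rw [this, hOiso v]
  have hortho : Omatᵀ * Omat = 1 := by
    ext i j
    have hpres : ∀ u v : Fin q → ℝ, (Omat *ᵥ u) ⬝ᵥ (Omat *ᵥ v) = u ⬝ᵥ v := by
      intro u v
      have := Oiso.inner_map_map (WithLp.toLp 2 u : EuclideanSpace ℝ (Fin q)) (WithLp.toLp 2 v : EuclideanSpace ℝ (Fin q))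
      rw [hinner, hinner] at this
      rw [hOmat, hOmat]
      exact this
    have key := hpres (Pi.single i 1) (Pi.single j 1)
    simp only [show ∀ l, Omat *ᵥ Pi.single l 1 = fun k => Omat k l * 1 from fun l => funext fun k => by
      simp [Matrix.mulVec, dotProduct, Pi.single_apply]] at key
    have lhs : (Omatᵀ * Omat) i j =
        (fun k => Omat k i * 1) ⬝ᵥ (fun k => Omat k j * 1) := by
      simp [Matrix.mul_apply, dotProduct, Matrix.transpose_apply]
    rw [lhs, key]
    by_cases hij : i = j
    · subst hij; simp [dotProduct, Pi.single_apply]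
    · simp only [dotProduct, Pi.single_apply, Matrix.one_apply, if_neg hij]
      rw [Finset.sum_eq_zero]
      intro k _
      by_cases hk : k = i <;> by_cases hk2 : k = j <;>
        simp_all [hij]
  refine ⟨Omatᵀ, ?_, ?_⟩
  · rw [Matrix.mem_orthogonalGroup_iff]
    rw [transpose_transpose]
    exact hortho
  · have := congrArg Matrix.transpose hOA
    rw [Matrix.transpose_mul, transpose_transpose, transpose_transpose] at this
    exact this.symm



lemma specDiag_sub {k : ℕ} {S : Matrix (Fin k) (Fin k) ℝ} (hS : S.IsHermitian)
    (v w : Fin k → ℝ) :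
    specDiag hS v - specDiag hS w = specDiag hS (v - w) := by
  rw [specDiag, specDiag, specDiag]
  have hdiag : diagonal (v - w) = diagonal v - diagonal w := by
    ext i j
    by_cases h : i = j
    · subst h; simp
    · simp [diagonal_apply_ne _ h]
  rw [hdiag, Matrix.mul_sub, Matrix.sub_mul]

lemma specDiag_conj {k : ℕ} {S : Matrix (Fin k) (Fin k) ℝ} (hS : S.IsHermitian)
    (v : Fin k → ℝ) :
    star (hS.eigenvectorUnitary : Matrix (Fin k) (Fin k) ℝ) * specDiag hS v *
      (hS.eigenvectorUnitary : Matrix (Fin k) (Fin k) ℝ) = diagonal v := by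
  set U := (hS.eigenvectorUnitary : Matrix (Fin k) (Fin k) ℝ) with hU
  have h1 : star U * (U * diagonal v * star U) * U
      = (star U * U) * diagonal v * (star U * U) := by
    simp only [Matrix.mul_assoc]
  rw [specDiag, ← hU, h1, star_mul_self_eigen hS, Matrix.one_mul, Matrix.mul_one]

lemma psd_qf {k : ℕ} {M : Matrix (Fin k) (Fin k) ℝ} (h : M.PosSemidef)
    (x : Fin k → ℝ) : 0 ≤ x ⬝ᵥ (M *ᵥ x) := by
  have := (posSemidef_iff_dotProduct_mulVec.mp h).2 x
  rwa [show star x = x from funext fun i => rfl] at this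

lemma qf_mul' {a b : ℕ} (Y : Matrix (Fin a) (Fin b) ℝ) (x : Fin b → ℝ) :
    x ⬝ᵥ ((Yᵀ * Y) *ᵥ x) = (Y *ᵥ x) ⬝ᵥ (Y *ᵥ x) := by
  have := qf_mul Yᵀ x
  rwa [transpose_transpose] at this

lemma dot_conj {a b : ℕ} (E : Matrix (Fin a) (Fin b) ℝ) (M : Matrix (Fin a) (Fin a) ℝ)
    (x : Fin b → ℝ) :
    (E *ᵥ x) ⬝ᵥ (M *ᵥ (E *ᵥ x)) = x ⬝ᵥ ((Eᵀ * M * E) *ᵥ x) := by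
  rw [← Matrix.mulVec_mulVec, ← Matrix.mulVec_mulVec, Matrix.dotProduct_mulVec (x) (Eᵀ),
    Matrix.vecMul_transpose]

lemma mulvec_eq_zero {a b : ℕ} (Y : Matrix (Fin a) (Fin b) ℝ)
    (h : ∀ x, Y *ᵥ x = 0) : Y = 0 := by
  ext i j
  have := congrFun (h (Pi.single j 1)) i
  rw [Matrix.mulVec_single] at this
  simpa using this

lemma mul_mul_cancel {a b c e : ℕ} {P : Matrix (Fin a) (Fin b) ℝ}
    {Q : Matrix (Fin b) (Fin c) ℝ} {Rm : Matrix (Fin a) (Fin c) ℝ}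
    (h : P * Q = Rm) (Z : Matrix (Fin c) (Fin e) ℝ) : P * (Q * Z) = Rm * Z := by
  rw [← Matrix.mul_assoc, h]

lemma key_decomp {d q : ℕ} (A B : Matrix (Fin d) (Fin q) ℝ)
    (hpsd : (B * Bᵀ - A * Aᵀ).PosSemidef) :
    ∃ O₀ ∈ Matrix.orthogonalGroup (Fin q) ℝ,
    ∃ (w : (Fin q → Bool) → ℝ) (Q : (Fin q → Bool) → Matrix (Fin q) (Fin q) ℝ),
      (∀ s, 0 ≤ w s) ∧ (∑ s, w s = 1) ∧
      (∀ s, Q s ∈ Matrix.orthogonalGroup (Fin q) ℝ) ∧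
      A * O₀ = ∑ s, w s • (B * Q s) := by
  classical
  obtain ⟨M, hMdef⟩ : ∃ M, M = B * Bᵀ := ⟨_, rfl⟩
  obtain ⟨N, hNdef⟩ : ∃ N, N = A * Aᵀ := ⟨_, rfl⟩
  rw [← hMdef, ← hNdef] at hpsd
  have hMp : M.PosSemidef := by
    rw [hMdef]
    have := Matrix.posSemidef_self_mul_conjTranspose B
    rwa [conjTranspose_eq_transpose_of_trivial] at this
  have hH := hMp.1
  obtain ⟨μ, hμdef⟩ : ∃ v, v = hH.eigenvalues := ⟨_, rfl⟩
  have hμ : ∀ i, 0 ≤ μ i := fun i => by rw [hμdef]; exact hMp.eigenvalues_nonneg i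
  obtain ⟨minv, hminvdef⟩ : ∃ v : Fin d → ℝ, v = fun i => if μ i = 0 then 0 else (μ i)⁻¹ :=
    ⟨_, rfl⟩
  obtain ⟨rinv, hrinvdef⟩ : ∃ v : Fin d → ℝ, v = fun i => Real.sqrt (minv i) := ⟨_, rfl⟩
  obtain ⟨ind, hinddef⟩ : ∃ v : Fin d → ℝ, v = fun i => if μ i = 0 then 0 else 1 := ⟨_, rfl⟩
  obtain ⟨Minv, hMinvdef⟩ : ∃ X, X = specDiag hH minv := ⟨_, rfl⟩
  obtain ⟨Pr, hPrdef⟩ : ∃ X, X = specDiag hH ind := ⟨_, rfl⟩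
  obtain ⟨R, hRdef⟩ : ∃ X, X = specDiag hH rinv := ⟨_, rfl⟩
  have hMspec : specDiag hH μ = M := by rw [hμdef]; exact specDiag_self hH
  have hminv0 : ∀ i, 0 ≤ minv i := fun i => by
    rw [hminvdef]; by_cases h : μ i = 0 <;> simp [h, inv_nonneg, hμ i]
  -- pointwise identities
  have f1 : minv * μ = ind := funext fun i => by
    by_cases h : μ i = 0 <;> simp [hminvdef, hinddef, h, inv_mul_cancel₀]
  have f2 : μ * minv = ind := by rw [mul_comm, f1]
  have f3 : ind * μ = μ := funext fun i => by
    by_cases h : μ i = 0 <;> simp [hinddef, h]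
  have f4 : rinv * rinv = minv := funext fun i => by
    simp [hrinvdef, Real.mul_self_sqrt (hminv0 i)]
  have f5 : rinv * (μ * rinv) = ind := funext fun i => by
    by_cases h : μ i = 0
    · simp [hrinvdef, hminvdef, hinddef, h]
    · have h1 : minv i = (μ i)⁻¹ := by simp [hminvdef, h]
      have h2 : 0 ≤ (μ i)⁻¹ := inv_nonneg.mpr (hμ i)
      show rinv i * (μ i * rinv i) = ind i
      rw [hinddef]
      simp only [hrinvdef, h1, if_neg h]
      rw [show Real.sqrt (μ i)⁻¹ * (μ i * Real.sqrt (μ i)⁻¹)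
          = μ i * (Real.sqrt (μ i)⁻¹ * Real.sqrt (μ i)⁻¹) by ring,
        Real.mul_self_sqrt h2]
      exact mul_inv_cancel₀ h
  have f6 : ind * minv = minv := funext fun i => by
    by_cases h : μ i = 0 <;> simp [hinddef, hminvdef, h]
  have f7 : minv * ind = minv := by rw [mul_comm, f6]
  -- matrix identities
  have hMinvM : Minv * M = Pr := by
    have h : specDiag hH minv * specDiag hH μ = specDiag hH ind := by
      rw [specDiag_mul, f1]
    rw [hMspec] at h
    rw [hMinvdef, hPrdef]; exact h
  have hMMinv : M * Minv = Pr := by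
    have h : specDiag hH μ * specDiag hH minv = specDiag hH ind := by
      rw [specDiag_mul, f2]
    rw [hMspec] at h
    rw [hMinvdef, hPrdef]; exact h
  have hPrM : Pr * M = M := by
    have h : specDiag hH ind * specDiag hH μ = specDiag hH μ := by
      rw [specDiag_mul, f3]
    rw [hMspec] at h
    rw [hPrdef]; exact h
  have hMinvPr : Minv * Pr = Minv := by
    rw [hMinvdef, hPrdef, specDiag_mul, f7]
  have hRR : R * R = Minv := by
    rw [hRdef, specDiag_mul, f4, hMinvdef]
  have hMinvsym : Minvᵀ = Minv := by rw [hMinvdef]; exact specDiag_transpose hH minv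
  have hPrsym : Prᵀ = Pr := by rw [hPrdef]; exact specDiag_transpose hH ind
  have hRsym : Rᵀ = R := by rw [hRdef]; exact specDiag_transpose hH rinv
  -- absorption : Pr * A = A
  have habs : Pr * A = A := by
    obtain ⟨T, hTdef⟩ : ∃ T, T = (1 : Matrix (Fin d) (Fin d) ℝ) - Pr := ⟨_, rfl⟩
    have hTsym : Tᵀ = T := by
      rw [hTdef, Matrix.transpose_sub, Matrix.transpose_one, hPrsym]
    have hTM : T * M = 0 := by
      rw [hTdef, Matrix.sub_mul, Matrix.one_mul, hPrM, sub_self]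
    have hconj := hpsd.mul_mul_conjTranspose_same T
    rw [conjTranspose_eq_transpose_of_trivial, hTsym] at hconj
    obtain ⟨Y, hYdef⟩ : ∃ Y, Y = T * A := ⟨_, rfl⟩
    have hTNT : T * (M - N) * T = -(Y * Yᵀ) := by
      rw [Matrix.mul_sub, hTM, zero_sub, Matrix.neg_mul, hYdef, Matrix.transpose_mul,
        hTsym, hNdef]
      rw [show T * (A * Aᵀ) * T = T * A * (Aᵀ * T) by simp only [Matrix.mul_assoc]]
    rw [hTNT] at hconj
    have hY0 : Yᵀ = 0 := by
      apply mulvec_eq_zero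
      intro x
      apply dot_self_eq_zero
      have h1 := psd_qf hconj x
      have h2 : x ⬝ᵥ ((Y * Yᵀ) *ᵥ x) = (Yᵀ *ᵥ x) ⬝ᵥ (Yᵀ *ᵥ x) := qf_mul Y x
      rw [Matrix.neg_mulVec, dotProduct_neg, h2] at h1
      have h3 := dot_self_nonneg (Yᵀ *ᵥ x)
      linarith
    have hY0' : Y = 0 := by
      have := congrArg Matrix.transpose hY0
      rwa [transpose_transpose, Matrix.transpose_zero] at this
    rw [hYdef] at hY0'
    rw [hTdef, Matrix.sub_mul, Matrix.one_mul, sub_eq_zero] at hY0'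
    exact hY0'.symm
  have habs' : Aᵀ * Pr = Aᵀ := by
    have := congrArg Matrix.transpose habs
    rwa [Matrix.transpose_mul, hPrsym] at this
  -- the contraction G
  obtain ⟨W, hWdef⟩ : ∃ W, W = Aᵀ * Minv * B := ⟨_, rfl⟩
  obtain ⟨G, hGdef⟩ : ∃ G, G = Wᵀ * W := ⟨_, rfl⟩
  have hWt : Wᵀ = Bᵀ * (Minv * A) := by
    rw [hWdef, Matrix.transpose_mul, Matrix.transpose_mul, hMinvsym, transpose_transpose]
  have hGpsd : G.PosSemidef := by
    rw [hGdef]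
    have := Matrix.posSemidef_conjTranspose_mul_self W
    rwa [conjTranspose_eq_transpose_of_trivial] at this
  have hGqf : ∀ x, x ⬝ᵥ (G *ᵥ x) ≤ x ⬝ᵥ x := by
    intro x
    have hWx : W *ᵥ x = Aᵀ *ᵥ ((Minv * B) *ᵥ x) := by
      rw [hWdef, Matrix.mul_assoc, ← Matrix.mulVec_mulVec]
    have step1 : x ⬝ᵥ (G *ᵥ x) = ((Minv * B) *ᵥ x) ⬝ᵥ (N *ᵥ ((Minv * B) *ᵥ x)) := by
      rw [hGdef, qf_mul' W x, hWx, hNdef, qf_mul A]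
    have step3 : ((Minv * B) *ᵥ x) ⬝ᵥ (N *ᵥ ((Minv * B) *ᵥ x))
        ≤ ((Minv * B) *ᵥ x) ⬝ᵥ (M *ᵥ ((Minv * B) *ᵥ x)) := by
      have := psd_qf hpsd ((Minv * B) *ᵥ x)
      rw [Matrix.sub_mulVec, dotProduct_sub] at this
      linarith
    have hmat : (Minv * B)ᵀ * M * (Minv * B) = Bᵀ * (Minv * B) := by
      rw [Matrix.transpose_mul, hMinvsym]
      calc Bᵀ * Minv * M * (Minv * B) = Bᵀ * (Minv * (M * (Minv * B))) := by
            simp only [Matrix.mul_assoc]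
        _ = Bᵀ * (Minv * (Pr * B)) := by rw [mul_mul_cancel hMMinv B]
        _ = Bᵀ * (Minv * B) := by rw [mul_mul_cancel hMinvPr B]
    have step4 : ((Minv * B) *ᵥ x) ⬝ᵥ (M *ᵥ ((Minv * B) *ᵥ x))
        = x ⬝ᵥ ((Bᵀ * (Minv * B)) *ᵥ x) := by
      rw [dot_conj (Minv * B) M x, hmat]
    have hXtX : (R * B)ᵀ * (R * B) = Bᵀ * (Minv * B) := by
      rw [Matrix.transpose_mul, hRsym]
      calc Bᵀ * R * (R * B) = Bᵀ * (R * (R * B)) := by simp only [Matrix.mul_assoc]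
        _ = Bᵀ * (Minv * B) := by rw [mul_mul_cancel hRR B]
    have hXXt : (R * B) * (R * B)ᵀ = Pr := by
      rw [Matrix.transpose_mul, hRsym]
      calc R * B * (Bᵀ * R) = R * (B * Bᵀ * R) := by simp only [Matrix.mul_assoc]
        _ = R * (M * R) := by rw [← hMdef]
        _ = Pr := by
            have hMR : M * R = specDiag hH (μ * rinv) := by
              have h : specDiag hH μ * specDiag hH rinv = specDiag hH (μ * rinv) :=
                specDiag_mul hH μ rinv
              rw [hMspec] at h
              rw [hRdef]; exact h
            rw [hMR, hRdef, specDiag_mul, f5, hPrdef]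
    have hPrle : ∀ v : Fin d → ℝ, v ⬝ᵥ (Pr *ᵥ v) ≤ v ⬝ᵥ v := by
      intro v
      have hps : (specDiag hH (1 - ind)).PosSemidef := by
        apply specDiag_posSemidef
        intro i
        rw [hinddef]
        by_cases h : μ i = 0 <;> simp [h]
      have h2 := psd_qf hps v
      rw [← specDiag_sub hH 1 ind, specDiag_one, ← hPrdef, Matrix.sub_mulVec,
        dotProduct_sub, Matrix.one_mulVec] at h2
      linarith
    have hConXT : Con (R * B)ᵀ := by
      intro v
      have h2 := qf_mul (R * B) v
      rw [hXXt] at h2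
      rw [← h2]
      exact hPrle v
    have hConX : Con (R * B) := con_flip _ hConXT
    have step5 : x ⬝ᵥ ((Bᵀ * (Minv * B)) *ᵥ x) ≤ x ⬝ᵥ x := by
      rw [← hXtX, qf_mul' (R * B) x]
      exact hConX x
    calc x ⬝ᵥ (G *ᵥ x) = _ := step1
      _ ≤ _ := step3
      _ = _ := step4
      _ ≤ x ⬝ᵥ x := step5
  -- spectral decomposition of G
  have hGH := hGpsd.1
  obtain ⟨g, hgdef⟩ : ∃ v, v = hGH.eigenvalues := ⟨_, rfl⟩
  have hGspec : specDiag hGH g = G := by rw [hgdef]; exact specDiag_self hGH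
  have hg0 : ∀ i, 0 ≤ g i := fun i => by rw [hgdef]; exact hGpsd.eigenvalues_nonneg i
  have hg1 : ∀ i, g i ≤ 1 := by
    have h1G : ((1 : Matrix (Fin q) (Fin q) ℝ) - G).PosSemidef := by
      refine Matrix.PosSemidef.of_dotProduct_mulVec_nonneg ?_ ?_
      · exact (Matrix.isHermitian_one).sub hGpsd.1
      · intro x
        rw [show star x = x from funext fun i => rfl, Matrix.sub_mulVec, dotProduct_sub,
          Matrix.one_mulVec]
        have := hGqf x
        linarith
    have hconj := h1G.conjTranspose_mul_mul_same
      (hGH.eigenvectorUnitary : Matrix (Fin q) (Fin q) ℝ)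
    rw [← Matrix.star_eq_conjTranspose] at hconj
    have hcomp : star (hGH.eigenvectorUnitary : Matrix (Fin q) (Fin q) ℝ) *
        ((1 : Matrix (Fin q) (Fin q) ℝ) - G) *
        (hGH.eigenvectorUnitary : Matrix (Fin q) (Fin q) ℝ) = 1 - diagonal g := by
      rw [Matrix.mul_sub, Matrix.mul_one, Matrix.sub_mul, star_mul_self_eigen hGH]
      congr 1
      have hGV := specDiag_conj hGH g
      rw [hGspec] at hGV
      exact hGV
    rw [hcomp] at hconj
    have hdiag : (1 : Matrix (Fin q) (Fin q) ℝ) - diagonal g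
        = diagonal (fun i => 1 - g i) := by
      ext i j
      by_cases h : i = j
      · subst h; simp [Matrix.one_apply]
      · simp [Matrix.one_apply, h, diagonal_apply_ne _ h]
    rw [hdiag] at hconj
    intro i
    have := Matrix.posSemidef_diagonal_iff.mp hconj i
    linarith
  -- K and its decomposition
  obtain ⟨sq, hsqdef⟩ : ∃ v : Fin q → ℝ, v = fun i => Real.sqrt (g i) := ⟨_, rfl⟩
  have hsq0 : ∀ i, 0 ≤ sq i := fun i => by rw [hsqdef]; exact Real.sqrt_nonneg _
  have hsq1 : ∀ i, sq i ≤ 1 := fun i => by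
    rw [hsqdef]
    exact Real.sqrt_le_one.mpr (hg1 i)
  obtain ⟨K, hKdef⟩ : ∃ K, K = specDiag hGH sq := ⟨_, rfl⟩
  have hKK : K * K = G := by
    rw [hKdef, specDiag_mul, show sq * sq = g from funext fun i => by
      simp [hsqdef, Real.mul_self_sqrt (hg0 i)], hGspec]
  have hKsym : Kᵀ = K := by rw [hKdef]; exact specDiag_transpose hGH sq
  -- C = B * K has the same Gram matrix as A
  have hCC : (B * K) * (B * K)ᵀ = A * Aᵀ := by
    rw [Matrix.transpose_mul, hKsym]
    have hWBt : W * Bᵀ = Aᵀ := by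
      calc W * Bᵀ = Aᵀ * (Minv * (B * Bᵀ)) := by
            rw [hWdef]; simp only [Matrix.mul_assoc]
        _ = Aᵀ * (Minv * M) := by rw [← hMdef]
        _ = Aᵀ * Pr := by rw [hMinvM]
        _ = Aᵀ := habs'
    have hBWt : B * Wᵀ = A := by
      calc B * Wᵀ = B * Bᵀ * (Minv * A) := by rw [hWt, Matrix.mul_assoc]
        _ = M * (Minv * A) := by rw [← hMdef]
        _ = Pr * A := mul_mul_cancel hMMinv A
        _ = A := habs
    calc B * K * (K * Bᵀ) = B * ((K * K) * Bᵀ) := by simp only [Matrix.mul_assoc]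
      _ = B * (G * Bᵀ) := by rw [hKK]
      _ = B * (Wᵀ * (W * Bᵀ)) := by rw [hGdef, Matrix.mul_assoc]
      _ = B * (Wᵀ * Aᵀ) := by rw [hWBt]
      _ = (B * Wᵀ) * Aᵀ := by rw [Matrix.mul_assoc]
      _ = A * Aᵀ := by rw [hBWt]
  -- sign decomposition of K
  obtain ⟨c, hcdef⟩ : ∃ c : Fin q → Bool → ℝ,
      c = fun i b => if b then (1 + sq i)/2 else (1 - sq i)/2 := ⟨_, rfl⟩
  obtain ⟨w, hwdef⟩ : ∃ w : (Fin q → Bool) → ℝ, w = fun s => ∏ i, c i (s i) := ⟨_, rfl⟩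
  obtain ⟨ε, hεdef⟩ : ∃ ε : (Fin q → Bool) → (Fin q → ℝ),
      ε = fun s i => if s i then (1:ℝ) else -1 := ⟨_, rfl⟩
  have hc0 : ∀ i b, 0 ≤ c i b := by
    intro i b
    rw [hcdef]
    cases b <;> simp <;> [linarith [hsq1 i]; linarith [hsq0 i]]
  have hcsum : ∀ i, c i true + c i false = 1 := by
    intro i; rw [hcdef]; simp; ring
  have hw0 : ∀ s, 0 ≤ w s := by
    intro s; rw [hwdef]
    exact Finset.prod_nonneg fun i _ => hc0 i (s i)
  have hwsum : ∑ s : Fin q → Bool, w s = 1 := by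
    rw [hwdef]
    have h := Finset.prod_univ_sum (fun _ : Fin q => (Finset.univ : Finset Bool)) c
    rw [Fintype.piFinset_univ] at h
    calc ∑ s : Fin q → Bool, ∏ i, c i (s i) = ∏ i, ∑ b : Bool, c i b := h.symm
      _ = 1 := Finset.prod_eq_one fun i _ => by rw [Fintype.sum_bool]; exact hcsum i
  have hwε : ∀ i, (∑ s : Fin q → Bool, w s * ε s i) = sq i := by
    intro i
    have hterm : ∀ s : Fin q → Bool, w s * ε s i
        = ∏ j, (c j (s j) * (if j = i then (if s j then (1:ℝ) else -1) else 1)) := by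
      intro s
      rw [Finset.prod_mul_distrib, hwdef]
      congr 1
      rw [Finset.prod_ite_eq' Finset.univ i (fun j => if s j then (1:ℝ) else -1)]
      rw [hεdef]
      simp
    rw [Finset.sum_congr rfl (fun s _ => hterm s)]
    have h := Finset.prod_univ_sum (fun _ : Fin q => (Finset.univ : Finset Bool))
      (fun j b => c j b * (if j = i then (if b then (1:ℝ) else -1) else 1))
    rw [Fintype.piFinset_univ] at h
    rw [← h]
    have hfac : ∀ j, (∑ b : Bool, c j b * (if j = i then (if b then (1:ℝ) else -1) else 1))
        = if j = i then sq j else 1 := by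
      intro j
      rw [Fintype.sum_bool]
      by_cases h : j = i
      · simp only [h, if_pos rfl, if_true]
        rw [hcdef]; simp; ring
      · simp only [if_neg h]
        rw [mul_one, mul_one]
        exact hcsum j
    rw [Finset.prod_congr rfl (fun j _ => hfac j)]
    rw [Finset.prod_ite_eq' Finset.univ i (fun j => sq j)]
    simp
  have hKsum : ∑ s : Fin q → Bool, w s • specDiag hGH (ε s) = K := by
    have hvec : (∑ s : Fin q → Bool, w s • ε s) = sq := by
      funext i
      simp only [Finset.sum_apply, Pi.smul_apply, smul_eq_mul]
      exact hwε i
    rw [specDiag_sum hGH Finset.univ w (fun s => ε s), hvec, hKdef]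
  have hQorth : ∀ s : Fin q → Bool,
      specDiag hGH (ε s) ∈ Matrix.orthogonalGroup (Fin q) ℝ := by
    intro s
    rw [Matrix.mem_orthogonalGroup_iff]
    rw [specDiag_transpose, specDiag_mul]
    rw [show ε s * ε s = 1 from funext fun i => by
      rw [hεdef]; by_cases h : s i <;> simp [h]]
    exact specDiag_one hGH
  -- isometry extension
  obtain ⟨O₀, hO₀mem, hO₀⟩ := exists_orth A (B * K) hCC
  refine ⟨O₀, hO₀mem, w, fun s => specDiag hGH (ε s), hw0, hwsum, hQorth, ?_⟩
  rw [← hO₀]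
  calc B * K = B * (∑ s : Fin q → Bool, w s • specDiag hGH (ε s)) := by rw [hKsum]
    _ = ∑ s : Fin q → Bool, w s • (B * specDiag hGH (ε s)) := by
        rw [Matrix.mul_sum]
        exact Finset.sum_congr rfl fun s _ => by rw [Matrix.mul_smul]

lemma sum_mulVec {a b : ℕ} {ι : Type*} (t : Finset ι) (Ms : ι → Matrix (Fin a) (Fin b) ℝ)
    (v : Fin b → ℝ) : (∑ i ∈ t, Ms i) *ᵥ v = ∑ i ∈ t, (Ms i) *ᵥ v := by
  induction t using Finset.cons_induction with
  | empty => simp [Matrix.zero_mulVec]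
  | cons a t ha ih => rw [Finset.sum_cons, Finset.sum_cons, Matrix.add_mulVec, ih]

lemma mulVec_continuous {a b : ℕ} (Mm : Matrix (Fin a) (Fin b) ℝ) :
    Continuous (fun v : Fin b → ℝ => Mm *ᵥ v) := by
  have h : (fun v : Fin b → ℝ => Mm *ᵥ v) = ⇑(Matrix.mulVecLin Mm) := by
    funext v
    rw [Matrix.mulVecLin_apply]
  rw [h]
  exact (Matrix.mulVecLin Mm).continuous_of_finiteDimensional

end RadialAux

open RadialAux in
theorem radial_convex_order (d q : ℕ)
    (Ω : Type*) [MeasurableSpace Ω] (P : Measure Ω) [IsProbabilityMeasure P]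
    (Z : Ω → (Fin q → ℝ)) (hZmeas : Measurable Z)
    (hZint : Integrable Z P)
    (hradial : ∀ O ∈ Matrix.orthogonalGroup (Fin q) ℝ,
      Measure.map (fun ω => (O : Matrix (Fin q) (Fin q) ℝ).mulVec (Z ω)) P
        = Measure.map Z P)
    (A B : Matrix (Fin d) (Fin q) ℝ)
    (hpsd : (B * Bᵀ - A * Aᵀ).PosSemidef) :
    ∀ f : (Fin d → ℝ) → ℝ, ConvexOn ℝ Set.univ f →
      Integrable (fun ω => f (A.mulVec (Z ω))) P →
      Integrable (fun ω => f (B.mulVec (Z ω))) P →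
      ∫ ω, f (A.mulVec (Z ω)) ∂P ≤ ∫ ω, f (B.mulVec (Z ω)) ∂P := by
  intro f hf hfA hfB
  obtain ⟨O₀, hO₀mem, w, Q, hw0, hwsum, hQmem, hsum⟩ := key_decomp A B hpsd
  have hfc : Continuous f := by
    rw [← continuousOn_univ]
    exact hf.continuousOn isOpen_univ
  have main : ∀ (O : Matrix (Fin q) (Fin q) ℝ), O ∈ Matrix.orthogonalGroup (Fin q) ℝ →
      ∀ (Mm : Matrix (Fin d) (Fin q) ℝ),
      (∫ ω, f ((Mm * O) *ᵥ (Z ω)) ∂P = ∫ ω, f (Mm *ᵥ (Z ω)) ∂P) ∧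
      (Integrable (fun ω => f ((Mm * O) *ᵥ (Z ω))) P ↔
        Integrable (fun ω => f (Mm *ᵥ (Z ω))) P) := by
    intro O hO Mm
    have hmap := hradial O hO
    have hφmeas : Measurable (fun ω => O *ᵥ (Z ω)) :=
      (mulVec_continuous O).measurable.comp hZmeas
    have hFcont : Continuous (fun v : Fin q → ℝ => f (Mm *ᵥ v)) :=
      hfc.comp (mulVec_continuous Mm)
    have hmv : ∀ ω, (Mm * O) *ᵥ (Z ω) = Mm *ᵥ (O *ᵥ (Z ω)) :=
      fun ω => (Matrix.mulVec_mulVec (Z ω) Mm O).symm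
    constructor
    · calc ∫ ω, f ((Mm * O) *ᵥ (Z ω)) ∂P
          = ∫ ω, f (Mm *ᵥ (O *ᵥ (Z ω))) ∂P := by simp only [hmv]
        _ = ∫ v, f (Mm *ᵥ v) ∂(Measure.map (fun ω => O *ᵥ (Z ω)) P) :=
            (integral_map hφmeas.aemeasurable
              (by rw [hmap]; exact hFcont.aestronglyMeasurable)).symm
        _ = ∫ v, f (Mm *ᵥ v) ∂(Measure.map Z P) := by rw [hmap]
        _ = ∫ ω, f (Mm *ᵥ (Z ω)) ∂P := integral_map hZmeas.aemeasurable
              hFcont.aestronglyMeasurable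
    · have h1 : Integrable (fun ω => f ((Mm * O) *ᵥ (Z ω))) P ↔
          Integrable (fun v => f (Mm *ᵥ v)) (Measure.map (fun ω => O *ᵥ (Z ω)) P) := by
        rw [integrable_map_measure (by rw [hmap]; exact hFcont.aestronglyMeasurable)
          hφmeas.aemeasurable]
        constructor
        · intro h; exact h.congr (Filter.Eventually.of_forall fun ω => by
            simp only [Function.comp_apply, hmv])
        · intro h; exact h.congr (Filter.Eventually.of_forall fun ω => by
            simp only [Function.comp_apply, hmv])
      have h2 : Integrable (fun v => f (Mm *ᵥ v)) (Measure.map Z P) ↔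
          Integrable (fun ω => f (Mm *ᵥ (Z ω))) P := by
        rw [integrable_map_measure hFcont.aestronglyMeasurable hZmeas.aemeasurable]
        exact Iff.rfl
      rw [h1, hmap, h2]
  have hintA : Integrable (fun ω => f ((A * O₀) *ᵥ (Z ω))) P :=
    ((main O₀ hO₀mem A).2).mpr hfA
  have hintB : ∀ s : Fin q → Bool, Integrable (fun ω => f ((B * Q s) *ᵥ (Z ω))) P :=
    fun s => ((main (Q s) (hQmem s) B).2).mpr hfB
  have hintSum : Integrable (fun ω => ∑ s : Fin q → Bool, w s * f ((B * Q s) *ᵥ (Z ω))) P :=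
    integrable_finset_sum _ fun s _ => (hintB s).const_mul (w s)
  have hptwise : ∀ ω, f ((A * O₀) *ᵥ (Z ω))
      ≤ ∑ s : Fin q → Bool, w s * f ((B * Q s) *ᵥ (Z ω)) := by
    intro ω
    have hrw : (A * O₀) *ᵥ (Z ω)
        = ∑ s : Fin q → Bool, w s • ((B * Q s) *ᵥ (Z ω)) := by
      rw [hsum, RadialAux.sum_mulVec]
      exact Finset.sum_congr rfl fun s _ => Matrix.smul_mulVec (w s) (B * Q s) (Z ω)
    rw [hrw]
    exact hf.map_sum_le (fun s _ => hw0 s) hwsum (fun s _ => Set.mem_univ _)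
  calc ∫ ω, f (A.mulVec (Z ω)) ∂P
      = ∫ ω, f ((A * O₀) *ᵥ (Z ω)) ∂P := ((main O₀ hO₀mem A).1).symm
    _ ≤ ∫ ω, ∑ s : Fin q → Bool, w s * f ((B * Q s) *ᵥ (Z ω)) ∂P :=
        integral_mono hintA hintSum hptwise
    _ = ∑ s : Fin q → Bool, ∫ ω, w s * f ((B * Q s) *ᵥ (Z ω)) ∂P :=
        integral_finset_sum _ fun s _ => (hintB s).const_mul (w s)
    _ = ∑ s : Fin q → Bool, w s * ∫ ω, f ((B * Q s) *ᵥ (Z ω)) ∂P := by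
        exact Finset.sum_congr rfl fun s _ => integral_const_mul (w s) _
    _ = ∑ s : Fin q → Bool, w s * ∫ ω, f (B.mulVec (Z ω)) ∂P := by
        exact Finset.sum_congr rfl fun s _ => by rw [(main (Q s) (hQmem s) B).1]
    _ = ∫ ω, f (B.mulVec (Z ω)) ∂P := by
        rw [← Finset.sum_mul, hwsum, one_mul]
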